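/- Let X be a topological vector space with a hereditarily universal countable family {T_n : n ∈ ℕ} of continuous linear operators, meaning that for every infinite subset A ⊆ ℕ there exists x ∈ X with {T_n x : n ∈ A} dense in X. Then the algebraic dimension of X is uncountable. -/

import Mathlib

open Set Filter Topology Pointwise

set_option linter.unusedSectionVars false
set_option maxHeartbeats 1000000

section TVSHelpers

variable {𝕜 : Type*} [RCLike 𝕜] {X : Type*}
    [AddCommGroup X] [Module 𝕜 X] [TopologicalSpace X] [IsTopologicalAddGroup X]
    [ContinuousSMul 𝕜 X] [T2Space X] [Nontrivial X]

/-- `sumChain U k` is the `k`-fold pointwise sumset `U + ⋯ + U` (with `sumChain U 0 = {0}`). -/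
def sumChain (U : Set X) : ℕ → Set X
  | 0 => {0}
  | (k+1) => sumChain U k + U

lemma zero_mem_sumChain {U : Set X} (hU : (0:X) ∈ U) : ∀ k, (0:X) ∈ sumChain U k
  | 0 => rfl
  | (k+1) => by
      have := zero_mem_sumChain hU k
      simpa [sumChain] using add_mem_add this hU

lemma sumChain_mono_set {U V : Set X} (h : U ⊆ V) : ∀ k, sumChain U k ⊆ sumChain V k
  | 0 => subset_rfl
  | (k+1) => add_subset_add (sumChain_mono_set h k) h

lemma sumChain_succ_mono {U : Set X} (hU : (0:X) ∈ U) (k : ℕ) :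
    sumChain U k ⊆ sumChain U (k+1) := by
  intro s hs
  have : s + 0 ∈ sumChain U k + U := add_mem_add hs hU
  simpa [sumChain] using this

lemma sumChain_mono {U : Set X} (hU : (0:X) ∈ U) {k l : ℕ} (h : k ≤ l) :
    sumChain U k ⊆ sumChain U l := by
  induction h with
  | refl => exact subset_rfl
  | step _ ih => exact ih.trans (sumChain_succ_mono hU _)

lemma balanced_sumChain {U : Set X} (hU : Balanced 𝕜 U) : ∀ k, Balanced 𝕜 (sumChain U k)
  | 0 => by
      intro a ha x hx
      simp only [Set.mem_smul_set] at hx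
      obtain ⟨y, hy, rfl⟩ := hx
      simp only [sumChain, Set.mem_singleton_iff] at hy ⊢
      simp [hy]
  | (k+1) => Balanced.add (balanced_sumChain hU k) hU

lemma smul_set_add' (c : 𝕜) (A B : Set X) : c • (A + B) = c • A + c • B := by
  ext x
  simp only [Set.mem_smul_set, Set.mem_add]
  constructor
  · rintro ⟨y, ⟨a, ha, b, hb, rfl⟩, rfl⟩
    exact ⟨c • a, ⟨a, ha, rfl⟩, c • b, ⟨b, hb, rfl⟩, (smul_add c a b).symm⟩
  · rintro ⟨_, ⟨a, ha, rfl⟩, _, ⟨b, hb, rfl⟩, rfl⟩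
    exact ⟨a + b, ⟨a, ha, b, hb, rfl⟩, smul_add c a b⟩

/-- Every nonempty open subset of a nontrivial topological vector space is infinite. -/
lemma open_nonempty_infinite (𝕜 : Type*) [RCLike 𝕜] [Module 𝕜 X] [ContinuousSMul 𝕜 X]
    {O : Set X} (hO : IsOpen O) (hne : O.Nonempty) : O.Infinite := by
  obtain ⟨o, ho⟩ := hne
  obtain ⟨v, hv⟩ := exists_ne (0 : X)
  have hcont : Continuous fun t : 𝕜 => o + t • v := by continuity
  have hpre : IsOpen ((fun t : 𝕜 => o + t • v) ⁻¹' O) := hO.preimage hcont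
  have h0 : (0:𝕜) ∈ (fun t : 𝕜 => o + t • v) ⁻¹' O := by simp [ho]
  obtain ⟨ε, hε, hball⟩ := Metric.isOpen_iff.mp hpre 0 h0
  have hIoo : (Set.Ioo (0:ℝ) (ε/2)).Infinite := Set.Ioo_infinite (by linarith)
  have hmap : Set.InjOn (fun r : ℝ => o + (r : 𝕜) • v) (Set.Ioo (0:ℝ) (ε/2)) := by
    intro a _ b _ hab
    simp only [add_right_inj] at hab
    have h1 : ((a:𝕜) - (b:𝕜)) • v = 0 := by
      rw [sub_smul, hab, sub_self]
    rcases smul_eq_zero.mp h1 with h | h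
    · have : (a:𝕜) = (b:𝕜) := sub_eq_zero.mp h
      exact_mod_cast this
    · exact absurd h hv
  have hsub : (fun r : ℝ => o + (r : 𝕜) • v) '' (Set.Ioo (0:ℝ) (ε/2)) ⊆ O := by
    rintro x ⟨r, hr, rfl⟩
    apply hball
    simp only [Metric.mem_ball, dist_zero_right]
    rw [RCLike.norm_ofReal, abs_of_pos hr.1]
    linarith [hr.2]
  exact ((hIoo.image hmap).mono hsub)

/-- The closure of any set is contained in `S + U` for a balanced neighborhood `U` of `0`. -/
lemma closure_subset_add_nhds {S U : Set X} (hU : U ∈ 𝓝 (0:X)) (hbal : Balanced 𝕜 U) :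
    closure S ⊆ S + U := by
  intro y hy
  have hN : (fun x : X => x - y) ⁻¹' U ∈ 𝓝 y := by
    rw [← nhds_translation_sub y]
    exact preimage_mem_comap hU
  obtain ⟨s, hsN, hsS⟩ := mem_closure_iff_nhds.mp hy _ hN
  have hsU : s - y ∈ U := hsN
  have hneg : y - s ∈ U := by
    have h1 : (-1 : 𝕜) • U ⊆ U := hbal (-1) (by simp)
    have h2 : (-1 : 𝕜) • (s - y) ∈ U := h1 ⟨s - y, hsU, rfl⟩
    rw [neg_one_smul, neg_sub] at h2
    exact h2
  exact ⟨s, hsS, y - s, hneg, by show s + (y - s) = y; abel⟩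

/-- There is a balanced neighborhood of zero whose `K`-fold sumset is inside `W`. -/
lemma exists_balanced_sumChain_subset (K : ℕ) {W : Set X} (hW : W ∈ 𝓝 (0:X)) :
    ∃ U, U ∈ 𝓝 (0:X) ∧ Balanced 𝕜 U ∧ sumChain U K ⊆ W := by
  induction K generalizing W with
  | zero =>
      refine ⟨balancedCore 𝕜 W, balancedCore_mem_nhds_zero hW, balancedCore_balanced W, ?_⟩
      intro x hx
      have hx0 : x = 0 := hx
      rw [hx0]
      exact mem_of_mem_nhds hW
  | succ K ih =>
      obtain ⟨V, hV, hVV⟩ := exists_nhds_zero_half hW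
      obtain ⟨U, hU, hUbal, hUK⟩ := ih hV
      refine ⟨balancedCore 𝕜 (U ∩ V), balancedCore_mem_nhds_zero (inter_mem hU hV),
        balancedCore_balanced _, ?_⟩
      have hsub : balancedCore 𝕜 (U ∩ V) ⊆ U ∩ V := balancedCore_subset _
      calc sumChain (balancedCore 𝕜 (U ∩ V)) (K+1)
          ⊆ sumChain U K + V := by
            refine add_subset_add ?_ ?_
            · exact sumChain_mono_set (hsub.trans inter_subset_left) K
            · exact hsub.trans inter_subset_right
        _ ⊆ V + V := add_subset_add_right hUK
        _ ⊆ W := by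
            rintro x ⟨a, ha, b, hb, rfl⟩
            exact hVV a ha b hb

/-- The terminal case of the extraction: on `B`, every element of `C` is trapped
and every element of `V \ C` visits `U` only finitely often, so every orbit
misses some nonempty open set. -/
lemma blockDone (T : ℕ → X →L[𝕜] X) {z : X} {U : Set X}
    (hU : U ∈ 𝓝 (0:X)) (hbal : Balanced 𝕜 U)
    (V : Submodule 𝕜 X) [FiniteDimensional 𝕜 V]
    (hz : z ∉ sumChain U (Module.finrank 𝕜 V + 1))
    (C : Submodule 𝕜 X) (hCV : C ≤ V)
    (B : Set ℕ) (hB : B.Infinite)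
    (htrap : ∀ x ∈ C, ∃ μ : 𝕜, μ ≠ 0 ∧ ∀ n ∈ B, T n x ∈ μ • sumChain U (Module.finrank 𝕜 C))
    (hmax : ∀ x, x ∈ V → x ∉ C → {n | n ∈ B ∧ T n x ∈ U}.Finite) :
    ∃ B', B' ⊆ B ∧ B'.Infinite ∧
      ∀ x ∈ V, ∃ O : Set X, IsOpen O ∧ O.Nonempty ∧ ∀ n ∈ B', T n x ∉ O := by
  haveI := Submodule.finiteDimensional_of_le hCV
  have hU0 : (0:X) ∈ U := mem_of_mem_nhds hU
  refine ⟨B, subset_rfl, hB, ?_⟩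
  intro x hxV
  by_cases hxC : x ∈ C
  · obtain ⟨μ, hμ, htr⟩ := htrap x hxC
    refine ⟨(closure (μ • sumChain U (Module.finrank 𝕜 C)))ᶜ,
      isOpen_compl_iff.mpr isClosed_closure, ⟨μ • z, ?_⟩, ?_⟩
    · simp only [mem_compl_iff]
      intro hmem
      have hcl : closure (μ • sumChain U (Module.finrank 𝕜 C))
          = μ • closure (sumChain U (Module.finrank 𝕜 C)) := by
        have h := (Homeomorph.smulOfNeZero μ hμ (α := X)).image_closure
          (sumChain U (Module.finrank 𝕜 C))
        simpa [Set.image_smul] using h.symm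
      rw [hcl] at hmem
      have hz1 : z ∈ closure (sumChain U (Module.finrank 𝕜 C)) :=
        (smul_mem_smul_set_iff₀ hμ _ z).mp hmem
      have hz2 : z ∈ sumChain U (Module.finrank 𝕜 C) + U :=
        closure_subset_add_nhds hU hbal hz1
      have hz3 : z ∈ sumChain U (Module.finrank 𝕜 C + 1) := hz2
      have hrk : Module.finrank 𝕜 C ≤ Module.finrank 𝕜 V := Submodule.finrank_mono hCV
      exact hz (sumChain_mono hU0 (by omega) hz3)
    · intro n hn
      simp only [mem_compl_iff, not_not]
      exact subset_closure (htr n hn)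
  · have hfin : {n | n ∈ B ∧ T n x ∈ U}.Finite := hmax x hxV hxC
    have hFv : ((fun n => T n x) '' {n | n ∈ B ∧ T n x ∈ U}).Finite := hfin.image _
    refine ⟨interior U \ ((fun n => T n x) '' {n | n ∈ B ∧ T n x ∈ U}),
      isOpen_interior.sdiff hFv.isClosed, ?_, ?_⟩
    · have hint : (interior U).Infinite :=
        open_nonempty_infinite 𝕜 isOpen_interior ⟨0, mem_interior_iff_mem_nhds.mpr hU⟩
      exact (hint.diff hFv).nonempty
    · intro n hn hmem
      obtain ⟨hmem1, hmem2⟩ := hmem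
      exact hmem2 ⟨n, ⟨hn, interior_subset hmem1⟩, rfl⟩

/-- Extraction procedure: refine `B` at most `m` times, extracting "trapped" directions. -/
lemma blockAux (T : ℕ → X →L[𝕜] X) {z : X} {U : Set X}
    (hU : U ∈ 𝓝 (0:X)) (hbal : Balanced 𝕜 U)
    (V : Submodule 𝕜 X) [FiniteDimensional 𝕜 V]
    (hz : z ∉ sumChain U (Module.finrank 𝕜 V + 1)) :
    ∀ (m : ℕ) (C : Submodule 𝕜 X), C ≤ V →
      Module.finrank 𝕜 V ≤ Module.finrank 𝕜 C + m →
      ∀ B : Set ℕ, B.Infinite →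
      (∀ x ∈ C, ∃ μ : 𝕜, μ ≠ 0 ∧ ∀ n ∈ B, T n x ∈ μ • sumChain U (Module.finrank 𝕜 C)) →
      ∃ B', B' ⊆ B ∧ B'.Infinite ∧
        ∀ x ∈ V, ∃ O : Set X, IsOpen O ∧ O.Nonempty ∧ ∀ n ∈ B', T n x ∉ O := by
  intro m
  induction m with
  | zero =>
      intro C hCV hbud B hB htrap
      by_cases hex : ∃ x, x ∈ V ∧ x ∉ C ∧ {n | n ∈ B ∧ T n x ∈ U}.Infinite
      · obtain ⟨x₀, hx₀V, hx₀C, _⟩ := hex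
        haveI := Submodule.finiteDimensional_of_le hCV
        have hCeq : C = V := Submodule.eq_of_le_of_finrank_le hCV (by simpa using hbud)
        rw [hCeq] at hx₀C
        exact absurd hx₀V hx₀C
      · push_neg at hex
        exact blockDone T hU hbal V hz C hCV B hB htrap
          (fun x hxV hxC => hex x hxV hxC)
  | succ m ih =>
      intro C hCV hbud B hB htrap
      by_cases hex : ∃ x, x ∈ V ∧ x ∉ C ∧ {n | n ∈ B ∧ T n x ∈ U}.Infinite
      · obtain ⟨x₀, hx₀V, hx₀C, hinf⟩ := hex
        haveI := Submodule.finiteDimensional_of_le hCV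
        have hx₀ne : x₀ ≠ 0 := fun h => hx₀C (h ▸ C.zero_mem)
        have hspan_le : Submodule.span 𝕜 {x₀} ≤ V := by
          rw [Submodule.span_le]; simpa using hx₀V
        have hC'V : C ⊔ Submodule.span 𝕜 {x₀} ≤ V := sup_le hCV hspan_le
        haveI : FiniteDimensional 𝕜 ↥(C ⊔ Submodule.span 𝕜 {x₀}) :=
          Submodule.finiteDimensional_of_le hC'V
        haveI : FiniteDimensional 𝕜 ↥(Submodule.span 𝕜 ({x₀} : Set X)) :=
          Submodule.finiteDimensional_of_le hspan_le
        have hinf_eq : C ⊓ Submodule.span 𝕜 {x₀} = ⊥ := by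
          rw [eq_bot_iff]
          rintro v ⟨hvC, hvS⟩
          obtain ⟨a, rfl⟩ := Submodule.mem_span_singleton.mp hvS
          rcases eq_or_ne a 0 with h | h
          · simp [h]
          · exfalso
            apply hx₀C
            have h2 : a⁻¹ • (a • x₀) ∈ C := C.smul_mem _ hvC
            rwa [smul_smul, inv_mul_cancel₀ h, one_smul] at h2
        have hrank : Module.finrank 𝕜 ↥(C ⊔ Submodule.span 𝕜 {x₀})
            = Module.finrank 𝕜 C + 1 := by
          have h1 := Submodule.finrank_sup_add_finrank_inf_eq C (Submodule.span 𝕜 {x₀})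
          rw [hinf_eq, finrank_bot, finrank_span_singleton hx₀ne] at h1
          omega
        have hB₁sub : {n | n ∈ B ∧ T n x₀ ∈ U} ⊆ B := fun n hn => hn.1
        have htrap' : ∀ x ∈ C ⊔ Submodule.span 𝕜 {x₀}, ∃ μ : 𝕜, μ ≠ 0 ∧
            ∀ n ∈ {n | n ∈ B ∧ T n x₀ ∈ U},
              T n x ∈ μ • sumChain U (Module.finrank 𝕜 ↥(C ⊔ Submodule.span 𝕜 {x₀})) := by
          intro x hx
          obtain ⟨y, hy, w, hw, rfl⟩ := Submodule.mem_sup.mp hx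
          obtain ⟨a, rfl⟩ := Submodule.mem_span_singleton.mp hw
          obtain ⟨μy, hμy, htry⟩ := htrap y hy
          have hpos : (0:ℝ) < ‖μy‖ + ‖a‖ + 1 := by positivity
          refine ⟨((‖μy‖ + ‖a‖ + 1 : ℝ) : 𝕜), ?_, ?_⟩
          · rw [Ne, RCLike.ofReal_eq_zero]
            exact ne_of_gt hpos
          · intro n hn
            have hμ'norm : ‖((‖μy‖ + ‖a‖ + 1 : ℝ) : 𝕜)‖ = ‖μy‖ + ‖a‖ + 1 := by
              rw [RCLike.norm_ofReal, abs_of_pos hpos]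
            have hTn : T n (y + a • x₀) = T n y + a • T n x₀ := by
              rw [map_add, map_smul]
            rw [hrank, hTn]
            have hsum : sumChain U (Module.finrank 𝕜 C + 1)
                = sumChain U (Module.finrank 𝕜 C) + U := rfl
            rw [hsum, smul_set_add']
            refine add_mem_add ?_ ?_
            · have h1 := htry n (hB₁sub hn)
              have hmono : μy • sumChain U (Module.finrank 𝕜 C)
                  ⊆ ((‖μy‖ + ‖a‖ + 1 : ℝ) : 𝕜) • sumChain U (Module.finrank 𝕜 C) :=
                (balanced_sumChain hbal _).smul_mono
                  (by rw [hμ'norm]; linarith [norm_nonneg a])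
              exact hmono h1
            · have hmem : T n x₀ ∈ U := hn.2
              have h2 : a • T n x₀ ∈ a • U := smul_mem_smul_set hmem
              have hmono : a • U ⊆ ((‖μy‖ + ‖a‖ + 1 : ℝ) : 𝕜) • U :=
                hbal.smul_mono (by rw [hμ'norm]; linarith [norm_nonneg μy])
              exact hmono h2
        have hbud' : Module.finrank 𝕜 V
            ≤ Module.finrank 𝕜 ↥(C ⊔ Submodule.span 𝕜 {x₀}) + m := by
          rw [hrank]; omega
        obtain ⟨B', hB'sub, hB'inf, hblock⟩ :=
          ih (C ⊔ Submodule.span 𝕜 {x₀}) hC'V hbud' _ hinf htrap'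
        exact ⟨B', hB'sub.trans hB₁sub, hB'inf, hblock⟩
      · push_neg at hex
        exact blockDone T hU hbal V hz C hCV B hB htrap
          (fun x hxV hxC => hex x hxV hxC)

/-- **Blocking lemma**: along a suitable infinite `B' ⊆ B`, every orbit of a vector of the
finite-dimensional subspace `V` misses some nonempty open set. -/
lemma block (T : ℕ → X →L[𝕜] X) (V : Submodule 𝕜 X) [FiniteDimensional 𝕜 V]
    (B : Set ℕ) (hB : B.Infinite) :
    ∃ B', B' ⊆ B ∧ B'.Infinite ∧
      ∀ x ∈ V, ∃ O : Set X, IsOpen O ∧ O.Nonempty ∧ ∀ n ∈ B', T n x ∉ O := by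
  obtain ⟨z, hz⟩ := exists_ne (0 : X)
  have hWnhds : ({z}ᶜ : Set X) ∈ 𝓝 (0:X) :=
    (isOpen_compl_singleton).mem_nhds (by simpa using (Ne.symm hz))
  obtain ⟨U, hU, hbal, hsub⟩ :=
    exists_balanced_sumChain_subset (𝕜 := 𝕜) (Module.finrank 𝕜 V + 1) hWnhds
  have hzU : z ∉ sumChain U (Module.finrank 𝕜 V + 1) := fun h => (hsub h) rfl
  have hU0 : (0:X) ∈ U := mem_of_mem_nhds hU
  have htrap : ∀ x ∈ (⊥ : Submodule 𝕜 X), ∃ μ : 𝕜, μ ≠ 0 ∧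
      ∀ n ∈ B, T n x ∈ μ • sumChain U (Module.finrank 𝕜 (⊥ : Submodule 𝕜 X)) := by
    intro x hx
    rw [Submodule.mem_bot] at hx
    subst hx
    refine ⟨1, one_ne_zero, fun n _ => ?_⟩
    rw [map_zero]
    have h0 : (0:X) ∈ sumChain U (Module.finrank 𝕜 (⊥ : Submodule 𝕜 X)) :=
      zero_mem_sumChain hU0 _
    have := smul_mem_smul_set (a := (1:𝕜)) h0
    rwa [smul_zero] at this
  have hbud : Module.finrank 𝕜 V
      ≤ Module.finrank 𝕜 (⊥ : Submodule 𝕜 X) + Module.finrank 𝕜 V := by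
    simp
  exact blockAux T hU hbal V hzU (Module.finrank 𝕜 V) ⊥ bot_le hbud B hB htrap

end TVSHelpers

section Diagonal

/-- Iterated refinement. -/
def refSeq (Φ : ℕ → Set ℕ → Set ℕ) : ℕ → Set ℕ
  | 0 => Φ 0 Set.univ
  | (k+1) => Φ (k+1) (refSeq Φ k)

/-- A diagonal strictly increasing sequence through a family of infinite sets. -/
noncomputable def diagSeq (S : ℕ → Set ℕ) (hS : ∀ k, (S k).Infinite) : ℕ → ℕ
  | 0 => ((hS 0).exists_gt 0).choose
  | (k+1) => ((hS (k+1)).exists_gt (diagSeq S hS k)).choose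

lemma diagSeq_mem (S : ℕ → Set ℕ) (hS : ∀ k, (S k).Infinite) :
    ∀ k, diagSeq S hS k ∈ S k
  | 0 => ((hS 0).exists_gt 0).choose_spec.1
  | (k+1) => ((hS (k+1)).exists_gt (diagSeq S hS k)).choose_spec.1

lemma diagSeq_strictMono (S : ℕ → Set ℕ) (hS : ∀ k, (S k).Infinite) :
    StrictMono (diagSeq S hS) := by
  apply strictMono_nat_of_lt_succ
  intro k
  exact ((hS (k+1)).exists_gt (diagSeq S hS k)).choose_spec.2

end Diagonal

/-- A topological vector space admitting a hereditarily universal countable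
family of continuous linear operators has uncountable algebraic dimension. -/
theorem stmt_14 {𝕜 : Type*} [RCLike 𝕜] {X : Type*}
    [AddCommGroup X] [Module 𝕜 X] [TopologicalSpace X] [IsTopologicalAddGroup X]
    [ContinuousSMul 𝕜 X] [T2Space X] [Nontrivial X]
    (T : ℕ → (X →L[𝕜] X))
    (huniv : ∀ A : Set ℕ, A.Infinite → ∃ x : X, Dense {y : X | ∃ n ∈ A, T n x = y}) :
    Cardinal.aleph0 < Module.rank 𝕜 X := by
  classical
  by_contra hrank
  rw [not_lt] at hrank
  -- a countable spanning sequence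
  obtain ⟨g, hg⟩ : ∃ g : ℕ → X, ∀ x : X, ∃ k : ℕ,
      x ∈ Submodule.span 𝕜 (g '' (Set.Iio k)) := by
    set b := Module.Basis.ofVectorSpace 𝕜 X
    have hmk : Cardinal.mk (Module.Basis.ofVectorSpaceIndex 𝕜 X) ≤ Cardinal.aleph0 := by
      rw [b.mk_eq_rank'']
      exact hrank
    haveI : Countable (Module.Basis.ofVectorSpaceIndex 𝕜 X) := Cardinal.mk_le_aleph0_iff.mp hmk
    haveI : Nonempty (Module.Basis.ofVectorSpaceIndex 𝕜 X) := by
      by_contra hne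
      rw [not_nonempty_iff] at hne
      obtain ⟨v, hv⟩ := exists_ne (0 : X)
      have hmem : v ∈ Submodule.span 𝕜 (Set.range b) := by
        rw [b.span_eq]; trivial
      rw [Set.range_eq_empty b, Submodule.span_empty, Submodule.mem_bot] at hmem
      exact hv hmem
    obtain ⟨f, hf⟩ := exists_surjective_nat (Module.Basis.ofVectorSpaceIndex 𝕜 X)
    refine ⟨fun n => b (f n), ?_⟩
    intro x
    have hx : x ∈ Submodule.span 𝕜 (Set.range fun n => b (f n)) := by
      have hr : Set.range (fun n => b (f n)) = Set.range b := by
        show Set.range (⇑b ∘ f) = Set.range ⇑b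
        exact hf.range_comp ⇑b
      rw [hr, b.span_eq]
      trivial
    obtain ⟨t, hts, hxt⟩ := Submodule.mem_span_finite_of_mem_span hx
    have hchoice : ∀ y ∈ t, ∃ n : ℕ, b (f n) = y := fun y hy => hts hy
    choose idx hidx using hchoice
    refine ⟨(t.attach.sup fun p => idx p.1 p.2) + 1, ?_⟩
    refine Submodule.span_mono ?_ hxt
    intro y hy
    refine ⟨idx y hy, ?_, hidx y hy⟩
    have hle : idx y hy ≤ t.attach.sup fun p => idx p.1 p.2 :=
      Finset.le_sup (f := fun p : {z // z ∈ t} => idx p.1 p.2) (Finset.mem_attach t ⟨y, hy⟩)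
    simpa [Set.mem_Iio] using Nat.lt_succ_of_le hle
  -- finite-dimensional stages
  set F : ℕ → Submodule 𝕜 X := fun k => Submodule.span 𝕜 (g '' (Set.Iio k)) with hF
  haveI hFfd : ∀ k, FiniteDimensional 𝕜 (F k) := fun k =>
    FiniteDimensional.span_of_finite 𝕜 ((Set.finite_Iio k).image g)
  -- blocking refinement as a total function
  have hblock : ∀ (k : ℕ) (B : Set ℕ), ∃ B', B.Infinite →
      (B' ⊆ B ∧ B'.Infinite ∧
        ∀ x ∈ F k, ∃ O : Set X, IsOpen O ∧ O.Nonempty ∧ ∀ n ∈ B', T n x ∉ O) := by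
    intro k B
    by_cases hB : B.Infinite
    · obtain ⟨B', h1, h2, h3⟩ := block T (F k) B hB
      exact ⟨B', fun _ => ⟨h1, h2, h3⟩⟩
    · exact ⟨B, fun h => absurd h hB⟩
  choose Φ hΦ using hblock
  set S : ℕ → Set ℕ := refSeq Φ with hS
  have hSprop : ∀ k, (S k).Infinite ∧
      ∀ x ∈ F k, ∃ O : Set X, IsOpen O ∧ O.Nonempty ∧ ∀ n ∈ S k, T n x ∉ O := by
    intro k
    induction k with
    | zero =>
        have h := hΦ 0 Set.univ Set.infinite_univ
        exact ⟨h.2.1, h.2.2⟩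
    | succ k ihk =>
        have h := hΦ (k+1) (S k) ihk.1
        exact ⟨h.2.1, h.2.2⟩
  have hSsub : ∀ k, S (k+1) ⊆ S k := by
    intro k
    exact (hΦ (k+1) (S k) (hSprop k).1).1
  have hSmono : ∀ j k, j ≤ k → S k ⊆ S j := by
    intro j k hjk
    induction hjk with
    | refl => exact subset_rfl
    | step _ ih => exact (hSsub _).trans ih
  -- the diagonal set
  have hSinf : ∀ k, (S k).Infinite := fun k => (hSprop k).1
  set d : ℕ → ℕ := diagSeq S hSinf with hd
  have hdmem : ∀ k, d k ∈ S k := diagSeq_mem S hSinf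
  have hdmono : StrictMono d := diagSeq_strictMono S hSinf
  have hdinf : (Set.range d).Infinite := Set.infinite_range_of_injective hdmono.injective
  -- apply hereditary universality along the diagonal
  obtain ⟨x, hx⟩ := huniv (Set.range d) hdinf
  obtain ⟨k, hk⟩ := hg x
  obtain ⟨O, hOopen, hOne, hOav⟩ := (hSprop k).2 x hk
  -- junk values from the finitely many diagonal points below level k
  have hstrag : (Set.range d) \ S k ⊆ d '' (Set.Iio k) := by
    rintro n ⟨⟨j, rfl⟩, hnk⟩
    refine ⟨j, ?_, rfl⟩
    by_contra hjk
    rw [Set.mem_Iio, not_lt] at hjk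
    exact hnk (hSmono k j hjk (hdmem j))
  have hJfin : ((fun n => T n x) '' ((Set.range d) \ S k)).Finite :=
    (((Set.finite_Iio k).image d).subset hstrag).image _
  have hO'open : IsOpen (O \ ((fun n => T n x) '' ((Set.range d) \ S k))) :=
    hOopen.sdiff hJfin.isClosed
  have hO'ne : (O \ ((fun n => T n x) '' ((Set.range d) \ S k))).Nonempty :=
    ((open_nonempty_infinite 𝕜 hOopen hOne).diff hJfin).nonempty
  obtain ⟨y, hyO', hymem⟩ := dense_iff_inter_open.mp hx _ hO'open hO'ne
  obtain ⟨n, hnB, rfl⟩ := hymem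
  by_cases hnS : n ∈ S k
  · exact hOav n hnS hyO'.1
  · exact hyO'.2 ⟨n, ⟨hnB, hnS⟩, rfl⟩
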